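/- arXiv:1201.3850 — 2 statements merged into one kernel-verified Lean document; each statement's English description precedes it below -/
import Mathlib

section
/- If Ψ is a Schwartz function on ℝ with ∫Ψ = 0 and ∫ xΨ(x) dx = 0, then there exists a smooth, rapidly decaying function φ such that Ψ̂(ξ) = ξ² φ̂(ξ) for all ξ ∈ ℝ. -/
open MeasureTheory FourierTransform

namespace AuxStmt2

open Filter Set


noncomputable def prim (f : ℝ → ℂ) (x : ℝ) : ℂ := ∫ t in Set.Iic x, f t

variable {f : ℝ → ℂ}

theorem prim_hasDerivAt (hc : Continuous f) (hi : Integrable f) (x : ℝ) :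
    HasDerivAt (prim f) (f x) x := by
  have heq : prim f = fun y => (prim f 0) + ∫ t in (0:ℝ)..y, f t := by
    funext y
    rw [eq_comm, add_comm, ← eq_sub_iff_add_eq, prim, prim,
      intervalIntegral.integral_Iic_sub_Iic hi.integrableOn hi.integrableOn]
  rw [heq]
  exact (intervalIntegral.integral_hasDerivAt_right hi.intervalIntegrable
    (hc.stronglyMeasurableAtFilter _ _) hc.continuousAt).const_add _

theorem prim_decay (hi : Integrable f)
    (hk : ∀ k : ℕ, Integrable (fun t => ‖t‖ ^ k * ‖f t‖)) (h0 : ∫ t, f t = 0) (k : ℕ) (x : ℝ) :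
    ‖x‖ ^ k * ‖prim f x‖ ≤ ∫ t, ‖t‖ ^ k * ‖f t‖ := by
  have hnn : ∀ t : ℝ, 0 ≤ ‖t‖ ^ k * ‖f t‖ := fun t => by positivity
  rcases le_or_gt x 0 with hx | hx
  · calc ‖x‖ ^ k * ‖prim f x‖ ≤ ‖x‖ ^ k * ∫ t in Set.Iic x, ‖f t‖ := by
          gcongr; exact norm_integral_le_integral_norm _
    _ = ∫ t in Set.Iic x, ‖x‖ ^ k * ‖f t‖ := by rw [integral_const_mul]
    _ ≤ ∫ t in Set.Iic x, ‖t‖ ^ k * ‖f t‖ := by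
          apply setIntegral_mono_on ((hi.norm.const_mul _).integrableOn)
            ((hk k).integrableOn) measurableSet_Iic
          intro t ht
          have : ‖x‖ ≤ ‖t‖ := by
            simp only [Real.norm_eq_abs]
            rw [abs_of_nonpos hx, abs_of_nonpos (ht.trans hx)]
            linarith [mem_Iic.mp ht]
          gcongr
    _ ≤ ∫ t, ‖t‖ ^ k * ‖f t‖ :=
          setIntegral_le_integral (hk k) (Filter.Eventually.of_forall hnn)
  · have hval : prim f x = - ∫ t in Set.Ioi x, f t := by
      have := intervalIntegral.integral_Iic_add_Ioi (b := x) hi.integrableOn hi.integrableOn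
      rw [h0] at this
      rw [prim]; linear_combination this
    rw [hval, norm_neg]
    calc ‖x‖ ^ k * ‖∫ t in Set.Ioi x, f t‖ ≤ ‖x‖ ^ k * ∫ t in Set.Ioi x, ‖f t‖ := by
          gcongr; exact norm_integral_le_integral_norm _
    _ = ∫ t in Set.Ioi x, ‖x‖ ^ k * ‖f t‖ := by rw [integral_const_mul]
    _ ≤ ∫ t in Set.Ioi x, ‖t‖ ^ k * ‖f t‖ := by
          apply setIntegral_mono_on ((hi.norm.const_mul _).integrableOn)
            ((hk k).integrableOn) measurableSet_Ioi
          intro t ht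
          have : ‖x‖ ≤ ‖t‖ := by
            simp only [Real.norm_eq_abs]
            rw [abs_of_pos hx, abs_of_pos (hx.trans (mem_Ioi.mp ht))]
            linarith [mem_Ioi.mp ht]
          gcongr
    _ ≤ ∫ t, ‖t‖ ^ k * ‖f t‖ :=
          setIntegral_le_integral (hk k) (Filter.Eventually.of_forall hnn)


theorem prim_continuous (hc : Continuous f) (hi : Integrable f) : Continuous (prim f) :=
  (Differentiable.continuous (fun x => (prim_hasDerivAt hc hi x).differentiableAt))

theorem prim_moments (hc : Continuous f) (hi : Integrable f)
    (hk : ∀ k : ℕ, Integrable (fun t => ‖t‖ ^ k * ‖f t‖)) (h0 : ∫ t, f t = 0) (k : ℕ) :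
    Integrable (fun t => ‖t‖ ^ k * ‖prim f t‖) := by
  set Mk := ∫ t, ‖t‖ ^ k * ‖f t‖ with hMk
  set Mk2 := ∫ t, ‖t‖ ^ (k + 2) * ‖f t‖ with hMk2
  have hcont : Continuous (prim f) := prim_continuous hc hi
  apply Integrable.mono' (g := fun t => (Mk + Mk2) * (1 + t ^ 2)⁻¹)
  · exact (integrable_inv_one_add_sq).const_mul _
  · exact ((continuous_norm.pow k).mul hcont.norm).aestronglyMeasurable
  · filter_upwards with t
    have h1 : ‖t‖ ^ k * ‖prim f t‖ ≤ Mk := prim_decay hi hk h0 k t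
    have h2 : ‖t‖ ^ (k + 2) * ‖prim f t‖ ≤ Mk2 := prim_decay hi hk h0 (k + 2) t
    have hnn : (0:ℝ) ≤ ‖t‖ ^ k * ‖prim f t‖ := by positivity
    rw [Real.norm_eq_abs, abs_of_nonneg hnn]
    rw [← div_eq_mul_inv, le_div_iff₀ (by positivity : (0:ℝ) < 1 + t ^ 2)]
    have hts : ‖t‖ ^ (k + 2) = ‖t‖ ^ k * t ^ 2 := by
      rw [pow_add, Real.norm_eq_abs, sq_abs]
    rw [hts, mul_comm (‖t‖ ^ k) (t^2), mul_assoc] at h2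
    nlinarith [h1, h2]
  
theorem prim_integrable (hc : Continuous f) (hi : Integrable f)
    (hk : ∀ k : ℕ, Integrable (fun t => ‖t‖ ^ k * ‖f t‖)) (h0 : ∫ t, f t = 0) :
    Integrable (prim f) := by
  have := prim_moments hc hi hk h0 0
  simp only [pow_zero, one_mul] at this
  exact (integrable_norm_iff (prim_continuous hc hi).aestronglyMeasurable).mp this


theorem prim_tendsto_top (hi : Integrable f)
    (hk : ∀ k : ℕ, Integrable (fun t => ‖t‖ ^ k * ‖f t‖)) (h0 : ∫ t, f t = 0) :
    Tendsto (prim f * fun x : ℝ => (x : ℂ)) atTop (nhds 0) := by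
  have hg : Tendsto (fun x : ℝ => (∫ t, ‖t‖ ^ 2 * ‖f t‖) / |x|) atTop (nhds 0) :=
    Tendsto.div_atTop tendsto_const_nhds tendsto_abs_atTop_atTop
  apply squeeze_zero_norm' _ hg
  · filter_upwards [eventually_ge_atTop (1:ℝ)] with x hx
    have h2 := prim_decay hi hk h0 2 x
    have hxpos : (0:ℝ) < |x| := by rw [abs_of_pos (by linarith)]; linarith
    rw [Pi.mul_apply, norm_mul, Complex.norm_real, Real.norm_eq_abs,
      le_div_iff₀ hxpos]
    calc ‖prim f x‖ * |x| * |x| = ‖x‖ ^ 2 * ‖prim f x‖ := by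
          rw [Real.norm_eq_abs]; ring
    _ ≤ _ := h2

theorem prim_tendsto_bot (hi : Integrable f)
    (hk : ∀ k : ℕ, Integrable (fun t => ‖t‖ ^ k * ‖f t‖)) (h0 : ∫ t, f t = 0) :
    Tendsto (prim f * fun x : ℝ => (x : ℂ)) atBot (nhds 0) := by
  have hg : Tendsto (fun x : ℝ => (∫ t, ‖t‖ ^ 2 * ‖f t‖) / |x|) atBot (nhds 0) :=
    Tendsto.div_atTop tendsto_const_nhds tendsto_abs_atBot_atTop
  apply squeeze_zero_norm' _ hg
  · filter_upwards [eventually_le_atBot (-1:ℝ)] with x hx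
    have h2 := prim_decay hi hk h0 2 x
    have hxpos : (0:ℝ) < |x| := by rw [abs_of_neg (by linarith)]; linarith
    rw [Pi.mul_apply, norm_mul, Complex.norm_real, Real.norm_eq_abs,
      le_div_iff₀ hxpos]
    calc ‖prim f x‖ * |x| * |x| = ‖x‖ ^ 2 * ‖prim f x‖ := by
          rw [Real.norm_eq_abs]; ring
    _ ≤ _ := h2

theorem mul_id_integrable (hc : Continuous f)
    (hk : ∀ k : ℕ, Integrable (fun t => ‖t‖ ^ k * ‖f t‖)) :
    Integrable (fun x : ℝ => f x * (x : ℂ)) := by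
  apply Integrable.mono' (hk 1)
    ((hc.mul Complex.continuous_ofReal).aestronglyMeasurable)
  filter_upwards with x
  rw [Pi.mul_apply, norm_mul, Complex.norm_real, pow_one, mul_comm]

theorem prim_integral_eq_zero (hc : Continuous f) (hi : Integrable f)
    (hk : ∀ k : ℕ, Integrable (fun t => ‖t‖ ^ k * ‖f t‖)) (h0 : ∫ t, f t = 0)
    (h1 : ∫ t : ℝ, (t : ℂ) * f t = 0) : ∫ t, prim f t = 0 := by
  have hibp := MeasureTheory.integral_mul_deriv_eq_deriv_mul
    (u := prim f) (u' := f) (v := fun x : ℝ => (x : ℂ)) (v' := fun _ => 1)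
    (fun x _ => prim_hasDerivAt hc hi x)
    (fun x _ => Complex.ofRealCLM.hasDerivAt)
    ((prim_integrable hc hi hk h0).congr (by filter_upwards with x; simp))
    (mul_id_integrable hc hk)
    (prim_tendsto_bot hi hk h0) (prim_tendsto_top hi hk h0)
  simp only [mul_one] at hibp
  have hcm : (∫ x : ℝ, f x * (x : ℂ)) = ∫ x : ℝ, (x : ℂ) * f x := by simp_rw [mul_comm]
  rw [hibp, sub_zero, zero_sub, neg_eq_zero, hcm, h1]


theorem fourier_smul (c : ℂ) (g : ℝ → ℂ) : 𝓕 (c • g) = c • 𝓕 g :=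
  VectorFourier.fourierIntegral_const_smul _ _ _ _ _

end AuxStmt2

open AuxStmt2

theorem stmt2 (Ψ : SchwartzMap ℝ ℂ)
    (h0 : ∫ x : ℝ, Ψ x = 0) (h1 : ∫ x : ℝ, (x : ℂ) * Ψ x = 0) :
    ∃ φ : SchwartzMap ℝ ℂ, ∀ ξ : ℝ, 𝓕 (⇑Ψ) ξ = (ξ:ℂ)^2 * 𝓕 (⇑φ) ξ := by
  have hc : Continuous (⇑Ψ) := Ψ.continuous
  have hi : Integrable (⇑Ψ) := Ψ.integrable
  have hk : ∀ k : ℕ, Integrable (fun t => ‖t‖ ^ k * ‖Ψ t‖) := fun k => Ψ.integrable_pow_mul volume k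
  -- first primitive
  set F₁ := prim (⇑Ψ) with hF₁
  have hd1 : ∀ x, HasDerivAt F₁ (Ψ x) x := prim_hasDerivAt hc hi
  have hc1 : Continuous F₁ := prim_continuous hc hi
  have hi1 : Integrable F₁ := prim_integrable hc hi hk h0
  have hk1 : ∀ k : ℕ, Integrable (fun t => ‖t‖ ^ k * ‖F₁ t‖) := prim_moments hc hi hk h0
  have h01 : ∫ t, F₁ t = 0 := prim_integral_eq_zero hc hi hk h0 h1
  -- second primitive
  set F₂ := prim F₁ with hF₂
  have hd2 : ∀ x, HasDerivAt F₂ (F₁ x) x := prim_hasDerivAt hc1 hi1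
  have hi2 : Integrable F₂ := prim_integrable hc1 hi1 hk1 h01
  have e2 : deriv F₂ = F₁ := funext fun x => (hd2 x).deriv
  have e1 : deriv F₁ = ⇑Ψ := funext fun x => (hd1 x).deriv
  -- smoothness
  have hsm : ContDiff ℝ ((⊤ : ℕ∞) : WithTop ℕ∞) F₂ := by
    rw [contDiff_infty_iff_deriv, e2]
    refine ⟨fun x => (hd2 x).differentiableAt, ?_⟩
    rw [contDiff_infty_iff_deriv, e1]
    exact ⟨fun x => (hd1 x).differentiableAt, Ψ.smooth ⊤⟩
  -- Schwartz structure
  have hdecay : ∀ k n : ℕ, ∃ C, ∀ x, ‖x‖ ^ k * ‖iteratedFDeriv ℝ n F₂ x‖ ≤ C := by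
    intro k n
    match n with
    | 0 =>
      refine ⟨∫ t, ‖t‖ ^ k * ‖F₁ t‖, fun x => ?_⟩
      rw [norm_iteratedFDeriv_eq_norm_iteratedDeriv, iteratedDeriv_zero]
      exact prim_decay hi1 hk1 h01 k x
    | 1 =>
      refine ⟨∫ t, ‖t‖ ^ k * ‖Ψ t‖, fun x => ?_⟩
      rw [norm_iteratedFDeriv_eq_norm_iteratedDeriv, iteratedDeriv_one, e2]
      exact prim_decay hi hk h0 k x
    | (n + 2) =>
      obtain ⟨C, hC⟩ := Ψ.decay k n
      refine ⟨C, fun x => ?_⟩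
      have hit : iteratedDeriv (n + 2) F₂ = iteratedDeriv n (⇑Ψ) := by
        rw [show n + 2 = (n + 1) + 1 by ring, iteratedDeriv_succ', e2,
          iteratedDeriv_succ', e1]
      rw [norm_iteratedFDeriv_eq_norm_iteratedDeriv, hit,
        ← norm_iteratedFDeriv_eq_norm_iteratedDeriv]
      exact hC.2 x
  set φ₀ : SchwartzMap ℝ ℂ := ⟨F₂, hsm, hdecay⟩ with hφ₀
  refine ⟨((-4 * Real.pi ^ 2 : ℝ) : ℂ) • φ₀, fun ξ => ?_⟩
  have key1 : 𝓕 (⇑Ψ) = fun ξ : ℝ => (2 * Real.pi * Complex.I * ξ) • 𝓕 F₁ ξ := by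
    rw [← e1]
    exact Real.fourier_deriv hi1 (fun x => (hd1 x).differentiableAt) (e1 ▸ hi)
  have key2 : 𝓕 F₁ = fun ξ : ℝ => (2 * Real.pi * Complex.I * ξ) • 𝓕 F₂ ξ := by
    rw [← e2]
    exact Real.fourier_deriv hi2 (fun x => (hd2 x).differentiableAt) (e2 ▸ hi1)
  have hcoe : ⇑(((-4 * Real.pi ^ 2 : ℝ) : ℂ) • φ₀) = ((-4 * Real.pi ^ 2 : ℝ) : ℂ) • F₂ := rfl
  rw [hcoe, AuxStmt2.fourier_smul]
  rw [key1]
  simp only [key2, Pi.smul_apply, smul_eq_mul]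
  push_cast
  ring_nf
  rw [Complex.I_sq]
  ring
end

section
/- Define m_d(ξ, ξ₁, …, ξ_d) = ∫_{[0,1]^d} sgn(ξ + α₁ξ₁ + ⋯ + α_dξ_d) dα₁⋯dα_d. Then for every (ξ, ξ₁, …, ξ_d) with ξ₁ ≠ 0, m_d(ξ, ξ₁, …, ξ_d) = (1/ξ₁) ∫_0^{ξ₁} ∫_{[0,1]^{d−1}} sgn(ξ + α + α₂ξ₂ + ⋯ + α_dξ_d) dα₂⋯dα_d dα, and its partial derivative with respect to ξ₁ (where it exists) equals (1/ξ₁)[ m_{d−1}(ξ+ξ₁, ξ₂, …, ξ_d) − m_d(ξ, ξ₁, …, ξ_d) ]. -/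
open MeasureTheory

/-- The symbol of the `n`-th Calderón commutator:
`m_n(ξ, v) = ∫_{[0,1]^n} sgn(ξ + Σᵢ αᵢ vᵢ) dα`. -/
noncomputable def mSym (n : ℕ) (ξ : ℝ) (v : Fin n → ℝ) : ℝ :=
  ∫ α in Set.univ.pi (fun _ : Fin n => Set.Icc (0:ℝ) 1),
    Real.sign (ξ + ∑ i, α i * v i)

lemma measurable_realSign : Measurable Real.sign := by
  have : Real.sign = fun r : ℝ => if r < 0 then (-1:ℝ) else if 0 < r then 1 else 0 := by
    funext r; rfl
  rw [this]
  exact Measurable.ite (measurableSet_lt measurable_id measurable_const) measurable_const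
    (Measurable.ite (measurableSet_lt measurable_const measurable_id) measurable_const
      measurable_const)

lemma realSign_mono : Monotone Real.sign := by
  intro a b hab
  rcases lt_trichotomy a 0 with ha | ha | ha
  · rw [Real.sign_of_neg ha]
    rcases Real.sign_apply_eq b with h | h | h <;> rw [h] <;> norm_num
  · subst ha
    rw [Real.sign_zero]
    rcases hab.eq_or_lt with h | h
    · rw [← h, Real.sign_zero]
    · rw [Real.sign_of_pos h]; norm_num
  · rw [Real.sign_of_pos ha, Real.sign_of_pos (ha.trans_le hab)]

lemma abs_realSign_le (x : ℝ) : ‖Real.sign x‖ ≤ 1 := by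
  rcases Real.sign_apply_eq x with h | h | h <;> rw [h] <;> norm_num

lemma integrableOn_sign_cube (n : ℕ) (c : ℝ) (w : Fin n → ℝ) :
    IntegrableOn (fun y : Fin n → ℝ => Real.sign (c + ∑ i, y i * w i))
      (Set.univ.pi fun _ : Fin n => Set.Icc (0:ℝ) 1) := by
  apply Measure.integrableOn_of_bounded (M := 1)
  · exact ((isCompact_univ_pi fun _ => isCompact_Icc).measure_lt_top).ne
  · exact (measurable_realSign.comp (measurable_const.add
      (Finset.measurable_sum _ fun i _ => (measurable_pi_apply i).mul_const _))).aestronglyMeasurable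
  · filter_upwards with y using abs_realSign_le _

lemma mSym_mono (n : ℕ) (rest : Fin n → ℝ) : Monotone (fun a : ℝ => mSym n a rest) := by
  intro a b hab
  exact setIntegral_mono (integrableOn_sign_cube n a rest) (integrableOn_sign_cube n b rest)
    fun y => realSign_mono (by linarith)

lemma mSym_succ (n : ℕ) (ξ : ℝ) (v : Fin (n+1) → ℝ) :
    mSym (n+1) ξ v
      = ∫ t in Set.Icc (0:ℝ) 1, mSym n (ξ + t * v 0) (fun i => v i.succ) := by
  set e := MeasurableEquiv.piFinSuccAbove (fun _ : Fin (n+1) => ℝ) 0 with he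
  have hmp := measurePreserving_piFinSuccAbove (fun _ : Fin (n+1) => (volume : Measure ℝ)) 0
  set S : Set (ℝ × (Fin n → ℝ)) :=
    (Set.Icc (0:ℝ) 1) ×ˢ (Set.univ.pi fun _ : Fin n => Set.Icc (0:ℝ) 1) with hS
  set G : ℝ × (Fin n → ℝ) → ℝ :=
    fun p => Real.sign (ξ + p.1 * v 0 + ∑ i, p.2 i * v i.succ) with hG
  have hpre : (Set.univ.pi fun _ : Fin (n+1) => Set.Icc (0:ℝ) 1) = e ⁻¹' S := by
    ext x
    simp only [hS, Set.mem_pi, Set.mem_univ, forall_true_left, Set.mem_preimage,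
      Set.mem_prod, he, MeasurableEquiv.piFinSuccAbove_apply,
      Fin.insertNthEquiv_symm_apply, Fin.removeNth_zero, Fin.tail]
    constructor
    · intro h
      exact ⟨h 0, fun i => h i.succ⟩
    · rintro ⟨h0, h1⟩ i
      refine Fin.cases h0 (fun j => h1 j) i
  have hcomp : ∀ x : Fin (n+1) → ℝ,
      Real.sign (ξ + ∑ i, x i * v i) = G (e x) := by
    intro x
    simp only [hG, he, MeasurableEquiv.piFinSuccAbove_apply,
      Fin.insertNthEquiv_symm_apply, Fin.removeNth_zero, Fin.tail]
    rw [Fin.sum_univ_succ, ← add_assoc]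
  have hGint : IntegrableOn G S ((volume : Measure ℝ).prod (Measure.pi fun _ => volume)) := by
    apply Measure.integrableOn_of_bounded (M := 1)
    · rw [hS]
      rw [Measure.prod_prod]
      exact (ENNReal.mul_lt_top (measure_Icc_lt_top)
        ((isCompact_univ_pi fun _ => isCompact_Icc).measure_lt_top)).ne
    · apply Measurable.aestronglyMeasurable
      apply measurable_realSign.comp
      apply Measurable.add
      · exact measurable_const.add (measurable_fst.mul_const _)
      · exact Finset.measurable_sum _ fun i _ =>
          ((measurable_pi_apply i).comp measurable_snd).mul_const _
    · filter_upwards with y using abs_realSign_le _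
  calc mSym (n+1) ξ v
      = ∫ x in e ⁻¹' S, G (e x) := by
        rw [mSym, hpre]
        exact setIntegral_congr_fun (e.measurable (by
          rw [hS]
          exact measurableSet_Icc.prod (MeasurableSet.univ_pi fun _ => measurableSet_Icc)))
          fun x _ => hcomp x
    _ = ∫ p in S, G p ∂((volume : Measure ℝ).prod (Measure.pi fun _ => volume)) := by
        exact hmp.setIntegral_preimage_emb e.measurableEmbedding G S
    _ = ∫ t in Set.Icc (0:ℝ) 1, ∫ y in (Set.univ.pi fun _ : Fin n => Set.Icc (0:ℝ) 1),
          G (t, y) ∂(Measure.pi fun _ => volume) := setIntegral_prod G hGint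
    _ = ∫ t in Set.Icc (0:ℝ) 1, mSym n (ξ + t * v 0) (fun i => v i.succ) := by
        rfl

lemma mSym_cons (n : ℕ) (ξ u : ℝ) (hu : u ≠ 0) (rest : Fin n → ℝ) :
    mSym (n+1) ξ (Fin.cons u rest) = u⁻¹ * ∫ α in (0:ℝ)..u, mSym n (ξ + α) rest := by
  rw [mSym_succ]
  simp only [Fin.cons_zero, Fin.cons_succ]
  rw [integral_Icc_eq_integral_Ioc, ← intervalIntegral.integral_of_le zero_le_one]
  have := intervalIntegral.integral_comp_mul_right (a := 0) (b := 1)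
    (fun α => mSym n (ξ + α) rest) hu
  simpa [smul_eq_mul] using this

theorem stmt11 (d : ℕ) (ξ ξ₁ : ℝ) (hξ₁ : ξ₁ ≠ 0) (rest : Fin d → ℝ)
    (hcont : ContinuousAt (fun α : ℝ => mSym d (ξ + α) rest) ξ₁) :
    mSym (d+1) ξ (Fin.cons ξ₁ rest) =
      (1 / ξ₁) * ∫ α in (0:ℝ)..ξ₁, mSym d (ξ + α) rest ∧
    HasDerivAt (fun u : ℝ => mSym (d+1) ξ (Fin.cons u rest))
      ((1 / ξ₁) *
        (mSym d (ξ + ξ₁) rest - mSym (d+1) ξ (Fin.cons ξ₁ rest))) ξ₁ := by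
  set g : ℝ → ℝ := fun α => mSym d (ξ + α) rest with hg
  have hgmono : Monotone g := fun a b hab => mSym_mono d rest (by linarith)
  have heq : mSym (d+1) ξ (Fin.cons ξ₁ rest) = (1 / ξ₁) * ∫ α in (0:ℝ)..ξ₁, g α := by
    rw [mSym_cons d ξ ξ₁ hξ₁ rest, one_div]
  refine ⟨heq, ?_⟩
  -- derivative of F u = ∫_0^u g
  have hF : HasDerivAt (fun u : ℝ => ∫ α in (0:ℝ)..u, g α) (g ξ₁) ξ₁ := by
    apply intervalIntegral.integral_hasDerivAt_right (hgmono.intervalIntegrable)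
    · exact (hgmono.measurable.stronglyMeasurable).stronglyMeasurableAtFilter
    · exact hcont
  have hprod : HasDerivAt (fun u : ℝ => u⁻¹ * ∫ α in (0:ℝ)..u, g α)
      (-(ξ₁ ^ 2)⁻¹ * (∫ α in (0:ℝ)..ξ₁, g α) + ξ₁⁻¹ * g ξ₁) ξ₁ :=
    (hasDerivAt_inv hξ₁).mul hF
  have hEv : (fun u : ℝ => u⁻¹ * ∫ α in (0:ℝ)..u, g α)
      =ᶠ[nhds ξ₁] fun u : ℝ => mSym (d+1) ξ (Fin.cons u rest) := by
    filter_upwards [isOpen_compl_singleton.mem_nhds (by simpa using hξ₁ :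
      ξ₁ ∈ ({0}ᶜ : Set ℝ))] with u hu
    exact (mSym_cons d ξ u hu rest).symm
  have hfinal := hprod.congr_of_eventuallyEq hEv.symm
  refine hfinal.congr_deriv ?_
  rw [heq]
  field_simp
  ring
end
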